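/- Fix y ∈ [0,1] and a ≥ 1. Then max(1, (1−y)² + a·y) / (1 − y + a·y) ≥ 4/5. -/
import Mathlib

/-- The key bivariate inequality for the two-box 4/5 approximation:
for `y ∈ [0,1]` and `a ≥ 1`, `max(1, (1−y)² + a·y) / (1 − y + a·y) ≥ 4/5`. -/
theorem two_box_ratio_ge_four_fifths
    (y a : ℝ) (hy0 : 0 ≤ y) (hy1 : y ≤ 1) (ha : 1 ≤ a) :
    max 1 ((1 - y) ^ 2 + a * y) / (1 - y + a * y) ≥ 4 / 5 := by
  have hD : (0:ℝ) < 1 - y + a * y := by nlinarith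
  rw [ge_iff_le, le_div_iff₀ hD]
  rcases le_or_gt (4 / 5 * (1 - y + a * y)) 1 with h | h
  · exact h.trans (le_max_left _ _)
  · refine le_trans ?_ (le_max_right _ _)
    nlinarith [sq_nonneg (y - 1/2)]
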